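/- Define Add(x,y,z,w) = Ñum(w) ∧ Sim(y,w) ∧ Plus(x,w,z), where Ñum(w) is 0̃ ≐ S(0̃) → 0̃ ≐ w, Sim(y,w) is 0 ≐ 0̃ → y ≐ w, and Plus(x,w,z) is 0̃ ≐ x → z ≐ w. Then there exists a closed term d such that Add(Sᵐ(0), Sᵖ(0), Sᵠ(0), d) is valid if and only if q = m + p. -/

import Mathlib

open FirstOrder Language

def L : FirstOrder.Language := ⟨fun _ => ℕ, fun _ => ℕ⟩

abbrev CTerm : Type := L.Term Empty

def kC {α : Type} (n : ℕ) : L.Term α := Term.func (n : L.Functions 0) ![]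
def Sf {α : Type} (t : L.Term α) : L.Term α := Term.func ((0 : ℕ) : L.Functions 1) ![t]
def Snum {α : Type} : ℕ → L.Term α → L.Term α
  | 0, t => t
  | m+1, t => Sf (Snum m t)
def pairT {α : Type} (t u : L.Term α) : L.Term α := Term.func ((0 : ℕ) : L.Functions 2) ![t, u]

def Valid {L' : FirstOrder.Language} (φ : L'.Sentence) : Prop :=
  ∀ (M : Type) [L'.Structure M] [Nonempty M], M ⊨ φ

def J (j k : ℕ) : ℕ := (j + k) * (j + k + 1) + k + 1

/-- Ñum(w) is 0̃ ≐ S(0̃) → 0̃ ≐ w, with 0̃ the constant of index 1. -/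
def NumTildeF (w : CTerm) : L.Sentence :=
  (Term.equal (kC 1) (Sf (kC 1))).imp (Term.equal (kC 1) w)

/-- Sim(y,w) is 0 ≐ 0̃ → y ≐ w. -/
def SimF (y w : CTerm) : L.Sentence :=
  (Term.equal (kC 0) (kC 1)).imp (Term.equal y w)

/-- Plus(x,w,z) is 0̃ ≐ x → z ≐ w. -/
def PlusF (x w z : CTerm) : L.Sentence :=
  (Term.equal (kC 1) x).imp (Term.equal z w)

/-- Add(x,y,z,w) = Ñum(w) ∧ Sim(y,w) ∧ Plus(x,w,z). -/
def AddF (x y z w : CTerm) : L.Sentence :=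
  NumTildeF w ⊓ SimF y w ⊓ PlusF x w z

/-! ### Auxiliary material -/

section Aux

lemma Snum_add' {α : Type} (a b : ℕ) (t : L.Term α) :
    Snum (a + b) t = Snum a (Snum b t) := by
  induction a with
  | zero => simp [Snum]
  | succ a ih => rw [Nat.succ_add]; simp only [Snum, ih]

variable {M : Type} [L.Structure M]

/-- The successor map in a structure. -/
def sM (M : Type) [L.Structure M] (x : M) : M :=
  Structure.funMap (L := L) ((0 : ℕ) : L.Functions 1) ![x]

/-- Value of a closed term in a structure. -/
def cval (M : Type) [L.Structure M] (t : CTerm) : M :=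
  Term.realize (default : Empty → M) t

lemma cval_Sf (t : CTerm) : cval M (Sf t) = sM M (cval M t) := by
  erw [cval, Sf, Term.realize_func, sM]
  congr 1
  funext i
  fin_cases i
  simp [cval]

lemma cval_Snum (k : ℕ) (t : CTerm) :
    cval M (Snum k t) = (sM M)^[k] (cval M t) := by
  induction k with
  | zero => simp [Snum]
  | succ k ih => simp only [Snum, cval_Sf, ih, Function.iterate_succ_apply']

lemma realize_AddF (x y z w : CTerm) :
    (M ⊨ AddF x y z w) ↔
      ((cval M (kC 1) = sM M (cval M (kC 1)) → cval M (kC 1) = cval M w) ∧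
       (cval M (kC 0) = cval M (kC 1) → cval M y = cval M w) ∧
       (cval M (kC 1) = cval M x → cval M z = cval M w)) := by
  have hs : Term.realize (default : Empty → M) (Sf (kC 1)) = sM M (cval M (kC 1)) :=
    cval_Sf _
  simp only [AddF, NumTildeF, SimF, PlusF, Sentence.Realize, Formula.realize_inf,
    Formula.realize_imp, Formula.realize_equal, and_assoc]
  rw [hs]
  exact Iff.rfl

/-! The term structure with `S(0̃)` collapsed to `0̃`. -/

open Classical in
noncomputable def tFun : ∀ {n : ℕ}, L.Functions n → (Fin n → CTerm) → CTerm
  | 1, f, args =>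
      if (show ℕ from f) = 0 ∧ args 0 = kC 1 then kC 1 else Term.func f args
  | _, f, args => Term.func f args

lemma tFun_zero (f : L.Functions 0) (args : Fin 0 → CTerm) :
    tFun f args = Term.func f args := rfl

open Classical in
lemma tFun_one (f : L.Functions 1) (args : Fin 1 → CTerm) :
    tFun f args =
      if (show ℕ from f) = 0 ∧ args 0 = kC 1 then kC 1 else Term.func f args := rfl

lemma tFun_ge2 {n : ℕ} (f : L.Functions (n + 2)) (args : Fin (n + 2) → CTerm) :
    tFun f args = Term.func f args := rfl

noncomputable def termStruc : L.Structure CTerm where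
  funMap := tFun
  RelMap _ _ := False

lemma termStruc_cval_k1 : @cval CTerm termStruc (kC 1) = kC 1 := by
  show tFun ((1 : ℕ) : L.Functions 0)
      (fun i => @Term.realize L CTerm termStruc Empty default ((![] : Fin 0 → CTerm) i)) = kC 1
  erw [tFun_zero, kC]
  exact congrArg _ (funext fun i => i.elim0)

lemma termStruc_sM_k1 : @sM CTerm termStruc (kC 1) = kC 1 := by
  show tFun ((0 : ℕ) : L.Functions 1) ![kC 1] = kC 1
  erw [tFun_one]
  simp

lemma termStruc_extract : ∀ t : CTerm, @cval CTerm termStruc t = kC 1 →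
    ∃ k, t = Snum k (kC 1) := by
  intro t
  induction t with
  | var e => exact fun _ => e.elim
  | @func n f args ih =>
    intro h
    have h' : tFun f (fun i => @cval CTerm termStruc (args i)) = kC 1 := h
    match n, f, args, ih, h' with
    | 0, f, args, ih, h' =>
      rw [tFun_zero, kC] at h'
      have hf : f = (1 : ℕ) := by injection h'
      refine ⟨0, ?_⟩
      show Term.func _ _ = kC 1
      rw [kC, hf]
      congr 1
      funext i
      exact i.elim0
    | 1, f, args, ih, h' =>
      rw [tFun_one] at h'
      by_cases hc : (show ℕ from f) = 0 ∧ @cval CTerm termStruc (args 0) = kC 1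
      · obtain ⟨k, hk⟩ := ih 0 hc.2
        refine ⟨k + 1, ?_⟩
        show Term.func _ _ = Snum (k + 1) (kC 1)
        rw [Snum, ← hk, Sf, show f = ((0 : ℕ) : L.Functions 1) from hc.1]
        congr 1
        funext i
        fin_cases i
        rfl
      · rw [if_neg hc] at h'
        exact absurd h' (by simp only [kC]; intro h; cases h)
    | (n + 2), f, args, ih, h' =>
      rw [tFun_ge2] at h'
      exact absurd h' (by simp only [kC]; intro h; cases h)

/-! The `ℕ` structure with `0 ↦ 0`, `0̃ ↦ b`, `S ↦ succ`. -/

def natFun (b : ℕ) : ∀ {n : ℕ}, L.Functions n → (Fin n → ℕ) → ℕ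
  | 0, f, _ => if (show ℕ from f) = 0 then 0 else b
  | 1, _, args => args 0 + 1
  | _+2, _, _ => 0

def natStruc (b : ℕ) : L.Structure ℕ where
  funMap := natFun b
  RelMap _ _ := False

lemma natStruc_k0 (b : ℕ) : @cval ℕ (natStruc b) (kC 0) = 0 := by
  letI := natStruc b
  erw [cval, kC, Term.realize_func]
  rfl

lemma natStruc_k1 (b : ℕ) : @cval ℕ (natStruc b) (kC 1) = b := by
  letI := natStruc b
  erw [cval, kC, Term.realize_func]
  rfl

lemma natStruc_sM (b x : ℕ) : @sM ℕ (natStruc b) x = x + 1 := rfl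

lemma natStruc_sM_iter (b k x : ℕ) : (@sM ℕ (natStruc b))^[k] x = x + k := by
  induction k with
  | zero => simp
  | succ k ih =>
    rw [Function.iterate_succ_apply', ih, natStruc_sM]
    omega

end Aux

theorem stmt_8 (m p q : ℕ) :
    (∃ d : CTerm, Valid (AddF (Snum m (kC 0)) (Snum p (kC 0)) (Snum q (kC 0)) d)) ↔
      q = m + p := by
  constructor
  · rintro ⟨d, hv⟩
    -- Step 1: in the term structure, `d` must be `Sᵏ(0̃)`.
    obtain ⟨k, hk⟩ : ∃ k, d = Snum k (kC 1) := by
      have h := ((@realize_AddF CTerm termStruc _ _ _ _).mp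
        (@hv CTerm termStruc ⟨kC 0⟩)).1
      rw [termStruc_cval_k1, termStruc_sM_k1] at h
      exact termStruc_extract d (h rfl).symm
    subst hk
    -- Step 2: the ℕ-structure with `0̃ ↦ 0` (Sim) gives `p = k`.
    have hpk : p = k := by
      have h := ((@realize_AddF ℕ (natStruc 0) _ _ _ _).mp
        (@hv ℕ (natStruc 0) ⟨0⟩)).2.1
      rw [natStruc_k0, natStruc_k1] at h
      have h' := h rfl
      rw [@cval_Snum ℕ (natStruc 0) p (kC 0), @cval_Snum ℕ (natStruc 0) k (kC 1),
        natStruc_k0, natStruc_k1, natStruc_sM_iter, natStruc_sM_iter] at h'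
      omega
    -- Step 3: the ℕ-structure with `0̃ ↦ m` (Plus) gives `q = m + k`.
    have h := ((@realize_AddF ℕ (natStruc m) _ _ _ _).mp
      (@hv ℕ (natStruc m) ⟨0⟩)).2.2
    rw [natStruc_k1, @cval_Snum ℕ (natStruc m) m (kC 0), natStruc_k0,
      natStruc_sM_iter] at h
    have h' := h (by omega)
    rw [@cval_Snum ℕ (natStruc m) q (kC 0), @cval_Snum ℕ (natStruc m) k (kC 1),
      natStruc_k0, natStruc_k1, natStruc_sM_iter, natStruc_sM_iter] at h'
    omega
  · rintro rfl
    refine ⟨Snum p (kC 1), fun M _ _ => ?_⟩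
    rw [realize_AddF]
    refine ⟨?_, ?_, ?_⟩
    · intro h
      rw [cval_Snum]
      exact (Function.iterate_fixed h.symm p).symm
    · intro h
      rw [cval_Snum, cval_Snum, h]
    · intro h
      rw [cval_Snum, cval_Snum, h, cval_Snum, Nat.add_comm m p,
        Function.iterate_add_apply]
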